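/- arXiv:0809.2963 — 2 statements merged into one kernel-verified Lean document; each statement's English description precedes it below -/
import Mathlib

section
/- (Liouville Principle, ℓ² version.) If ψ ∈ ℓ²(ℤ²) satisfies Q^b ψ = 0, where Q^b = 1 + t₁ + t₂ on the triangular lattice, then ψ = 0. -/
open Filter
open scoped ENNReal

set_option maxHeartbeats 1000000

def Qb (ψ : ℤ × ℤ → ℝ) : ℤ × ℤ → ℝ :=
  fun p => ψ p + ψ (p.1 + 1, p.2) + ψ (p.1, p.2 + 1)

private lemma summable_shift {f : ℤ → ℝ} (hf : Summable f) :
    Summable fun m => f (m + 1) := by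
  have := (Equiv.addRight (1 : ℤ)).summable_iff.mpr hf
  simpa [Function.comp_def] using this

private lemma tsum_shift (f : ℤ → ℝ) : ∑' m, f (m + 1) = ∑' m, f m := by
  have := (Equiv.addRight (1 : ℤ)).tsum_eq f
  simpa using this

private lemma summable_mul' {f g : ℤ → ℝ} (hf : Summable fun m => f m ^ 2)
    (hg : Summable fun m => g m ^ 2) : Summable fun m => f m * g m := by
  apply Summable.of_abs
  apply Summable.of_nonneg_of_le (fun m => abs_nonneg _) (fun m => ?_)
    ((hf.add hg).div_const 2)
  rw [abs_mul]
  nlinarith [sq_nonneg (|f m| - |g m|), sq_abs (f m), sq_abs (g m),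
    abs_nonneg (f m), abs_nonneg (g m)]

private lemma sq_summable_B {f : ℤ → ℝ} (hf : Summable fun m => f m ^ 2) :
    Summable fun m => (f m + f (m + 1)) ^ 2 := by
  have hf1 : Summable fun m => f (m + 1) ^ 2 := summable_shift hf
  apply Summable.of_nonneg_of_le (fun m => sq_nonneg _) (fun m => ?_)
    ((hf.add hf1).mul_left 2)
  nlinarith [sq_nonneg (f m - f (m + 1))]

private lemma tsum_cauchy_schwarz {f g : ℤ → ℝ} (hf : Summable fun m => f m ^ 2)
    (hg : Summable fun m => g m ^ 2) :
    (∑' m, f m * g m) ^ 2 ≤ (∑' m, f m ^ 2) * ∑' m, g m ^ 2 := by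
  have hfg := summable_mul' hf hg
  have h0 : Tendsto (fun s : Finset ℤ => ∑ m ∈ s, f m * g m) atTop
      (nhds (∑' m, f m * g m)) := hfg.hasSum
  have h1 : Tendsto (fun s : Finset ℤ => (∑ m ∈ s, f m * g m) ^ 2) atTop
      (nhds ((∑' m, f m * g m) ^ 2)) := h0.pow 2
  refine le_of_tendsto h1 (Eventually.of_forall fun s => ?_)
  calc (∑ m ∈ s, f m * g m) ^ 2
      ≤ (∑ m ∈ s, f m ^ 2) * ∑ m ∈ s, g m ^ 2 :=
        Finset.sum_mul_sq_le_sq_mul_sq s f g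
    _ ≤ (∑' m, f m ^ 2) * ∑' m, g m ^ 2 :=
        mul_le_mul (Summable.sum_le_tsum s (fun _ _ => sq_nonneg _) hf)
          (Summable.sum_le_tsum s (fun _ _ => sq_nonneg _) hg)
          (Finset.sum_nonneg fun _ _ => sq_nonneg _)
          (tsum_nonneg fun _ => sq_nonneg _)

private lemma key_ineq {f : ℤ → ℝ} (hf : Summable fun m => f m ^ 2) :
    (∑' m, (f m + f (m + 1)) ^ 2) ^ 2 ≤
      (∑' m, f m ^ 2) *
        ∑' m, ((f m + f (m + 1)) + (f (m + 1) + f (m + 1 + 1))) ^ 2 := by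
  set g : ℤ → ℝ := fun m => f m + f (m + 1) with hgdef
  have hg : Summable fun m => g m ^ 2 := sq_summable_B hf
  have hf1 : Summable fun m => f (m + 1) ^ 2 := summable_shift hf
  have hg1 : Summable fun m => g (m + 1) ^ 2 := summable_shift hg
  have hv : Summable fun m => (g m + g (m + 1)) ^ 2 := sq_summable_B hg
  have E : ∑' m, g m ^ 2 = ∑' m, f (m + 1) * (g m + g (m + 1)) := by
    calc ∑' m, g m ^ 2
        = ∑' m, (f m * g m + f (m + 1) * g m) := by
          refine tsum_congr fun m => ?_
          simp only [hgdef]; ring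
      _ = (∑' m, f m * g m) + ∑' m, f (m + 1) * g m :=
          Summable.tsum_add (summable_mul' hf hg) (summable_mul' hf1 hg)
      _ = (∑' m, f (m + 1) * g (m + 1)) + ∑' m, f (m + 1) * g m := by
          rw [tsum_shift (fun m => f m * g m)]
      _ = ∑' m, (f (m + 1) * g (m + 1) + f (m + 1) * g m) :=
          (Summable.tsum_add (summable_mul' hf1 hg1) (summable_mul' hf1 hg)).symm
      _ = ∑' m, f (m + 1) * (g m + g (m + 1)) := tsum_congr fun m => by ring
  have CS := tsum_cauchy_schwarz (f := fun m => f (m + 1)) (g := fun m => g m + g (m + 1))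
    hf1 hv
  have hshift : ∑' m, f (m + 1) ^ 2 = ∑' m, f m ^ 2 := tsum_shift (fun m => f m ^ 2)
  calc (∑' m, g m ^ 2) ^ 2
      = (∑' m, f (m + 1) * (g m + g (m + 1))) ^ 2 := by rw [E]
    _ ≤ (∑' m, f (m + 1) ^ 2) * ∑' m, (g m + g (m + 1)) ^ 2 := CS
    _ = (∑' m, f m ^ 2) * ∑' m, (g m + g (m + 1)) ^ 2 := by rw [hshift]

/-- Liouville principle: an ℓ² d-holomorphic function on the triangular lattice vanishes. -/
theorem liouville_l2 (ψ : ℤ × ℤ → ℝ) (hψ : Memℓp ψ 2)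
    (hol : ∀ p : ℤ × ℤ, Qb ψ p = 0) : ψ = 0 := by
  by_contra hne
  obtain ⟨p0, hp0⟩ : ∃ p, ψ p ≠ 0 := by
    by_contra h; push_neg at h; exact hne (funext h)
  -- summability of squares
  have hsum : Summable fun p : ℤ × ℤ => ψ p ^ 2 := by
    have h2 : (0 : ℝ) < (2 : ℝ≥0∞).toReal := by norm_num
    have hs := (memℓp_gen_iff h2).mp hψ
    refine hs.congr fun p => ?_
    have : ((2 : ℝ≥0∞).toReal) = ((2 : ℕ) : ℝ) := by norm_num
    rw [this, Real.rpow_natCast, Real.norm_eq_abs, sq_abs]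
  have hsum' : Summable fun q : ℤ × ℤ => ψ (q.2, q.1) ^ 2 := by
    have := (Equiv.prodComm ℤ ℤ).summable_iff.mpr hsum
    simpa [Function.comp_def, Prod.swap] using this
  obtain ⟨hrow, hμ⟩ := (summable_prod_of_nonneg (fun q => sq_nonneg _)).mp hsum'
  -- rows
  set a : ℤ → ℝ := fun n => ∑' m, ψ (m, n) ^ 2 with hadef
  have hrow' : ∀ n : ℤ, Summable fun m => ψ (m, n) ^ 2 := fun n => hrow n
  have hμ' : Summable a := hμ
  have hrec : ∀ n m : ℤ, ψ (m, n + 1) = -(ψ (m, n) + ψ (m + 1, n)) := by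
    intro n m
    have := hol (m, n)
    simp only [Qb] at this
    linarith
  have anonneg : ∀ n, 0 ≤ a n := fun n => tsum_nonneg fun m => sq_nonneg _
  -- the row-sum expressions
  have e1 : ∀ n : ℤ, a (n + 1) = ∑' m, (ψ (m, n) + ψ (m + 1, n)) ^ 2 := by
    intro n
    exact tsum_congr fun m => by rw [hrec n m]; ring
  have e2 : ∀ n : ℤ, a (n + 2) =
      ∑' m, ((ψ (m, n) + ψ (m + 1, n)) + (ψ (m + 1, n) + ψ (m + 1 + 1, n))) ^ 2 := by
    intro n
    refine tsum_congr fun m => ?_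
    have h21 : (n : ℤ) + 2 = n + 1 + 1 := by ring
    rw [h21, hrec (n + 1) m, hrec n m, hrec n (m + 1)]
    ring
  -- key log-convexity inequality
  have hkey : ∀ n : ℤ, a (n + 1) ^ 2 ≤ a n * a (n + 2) := by
    intro n
    have h := key_ineq (f := fun m => ψ (m, n)) (hrow' n)
    rw [e1 n, e2 n]
    exact h
  -- zero propagation
  have hvanish : ∀ n : ℤ, a n = 0 → ∀ m, ψ (m, n) = 0 := by
    intro n h0 m
    have h1 : ψ (m, n) ^ 2 ≤ 0 := by
      have h2 := Summable.le_tsum (hrow' n) m (fun j _ => sq_nonneg _)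
      have h3 : (∑' i : ℤ, ψ (i, n) ^ 2) = 0 := h0
      linarith
    have := sq_nonneg (ψ (m, n))
    nlinarith
  have hfwd : ∀ n : ℤ, a n = 0 → a (n + 1) = 0 := by
    intro n h0
    have : ∀ m : ℤ, ψ (m, n + 1) ^ 2 = 0 := by
      intro m
      rw [hrec n m, hvanish n h0 m, hvanish n h0 (m + 1)]
      ring
    calc a (n + 1) = ∑' m : ℤ, (0 : ℝ) := tsum_congr fun m => this m
      _ = 0 := tsum_zero
  have hbwd : ∀ n : ℤ, a (n + 1) = 0 → a n = 0 := by
    intro n h0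
    have hgs : Summable fun m => (ψ (m, n) + ψ (m + 1, n)) ^ 2 :=
      sq_summable_B (hrow' n)
    have hg0 : ∀ m : ℤ, ψ (m, n) + ψ (m + 1, n) = 0 := by
      intro m
      have h1 : (ψ (m, n) + ψ (m + 1, n)) ^ 2 ≤ 0 := by
        have := Summable.le_tsum hgs m (fun j _ => sq_nonneg _)
        rw [← e1 n, h0] at this
        exact this
      nlinarith [sq_nonneg (ψ (m, n) + ψ (m + 1, n))]
    -- so the squares are constant along the row
    have hconst : ∀ m : ℤ, ψ (m, n) ^ 2 = ψ (0, n) ^ 2 := by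
      intro m
      induction m using Int.induction_on with
      | zero => rfl
      | succ k ih =>
        have := hg0 k
        have hsq : ψ (k + 1, n) = -ψ (k, n) := by linarith
        rw [hsq, neg_sq, ih]
      | pred k ih =>
        have := hg0 (-(k : ℤ) - 1)
        have hr : (-(k : ℤ) - 1) + 1 = -(k : ℤ) := by ring
        rw [hr] at this
        have hsq : ψ (-(k : ℤ) - 1, n) = -ψ (-(k : ℤ), n) := by linarith
        rw [hsq, neg_sq, ih]
    have hcs : Summable fun _ : ℤ => ψ (0, n) ^ 2 :=
      (hrow' n).congr fun m => hconst m
    have hz : ψ (0, n) ^ 2 = 0 := summable_const_iff _ |>.mp hcs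
    calc a n = ∑' m : ℤ, (0 : ℝ) := tsum_congr fun m => by rw [hconst m, hz]
      _ = 0 := tsum_zero
  -- positivity of a at the row of p0
  have hap : 0 < a p0.2 := by
    refine Summable.tsum_pos (hrow' p0.2) (fun m => sq_nonneg _) p0.1 ?_
    have : ψ (p0.1, p0.2) ≠ 0 := by simpa using hp0
    positivity
  -- zero propagation over arbitrary distances
  have hup : ∀ n : ℤ, a n = 0 → ∀ j : ℕ, a (n + j) = 0 := by
    intro n h0 j
    induction j with
    | zero => simpa using h0
    | succ k ih =>
      have := hfwd (n + k) ih
      have hr : (n + (k : ℤ)) + 1 = n + ((k : ℕ) + 1 : ℕ) := by push_cast; ring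
      rwa [hr] at this
  have hdown : ∀ n : ℤ, a n = 0 → ∀ j : ℕ, a (n - j) = 0 := by
    intro n h0 j
    induction j with
    | zero => simpa using h0
    | succ k ih =>
      have hr : (n - ((k : ℕ) + 1 : ℕ) : ℤ) + 1 = n - k := by push_cast; ring
      exact hbwd _ (by rw [hr]; exact ih)
  have hpos : ∀ n : ℤ, 0 < a n := by
    intro n
    rcases lt_or_eq_of_le (anonneg n) with h | h
    · exact h
    · exfalso
      have h0 : a n = 0 := h.symm
      rcases le_total n p0.2 with hle | hle
      · have := hup n h0 (p0.2 - n).toNat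
        rw [show n + ((p0.2 - n).toNat : ℤ) = p0.2 by omega] at this
        exact hap.ne' this
      · have := hdown n h0 (n - p0.2).toNat
        rw [show n - ((n - p0.2).toNat : ℤ) = p0.2 by omega] at this
        exact hap.ne' this
  -- ratio is monotone
  set q : ℤ → ℝ := fun n => a (n + 1) / a n with hqdef
  have hqmono : Monotone q := by
    apply monotone_int_of_le_succ
    intro n
    rw [hqdef]
    rw [div_le_div_iff₀ (hpos n) (hpos (n + 1))]
    have := hkey n
    have h21 : (n : ℤ) + 1 + 1 = n + 2 := by ring
    rw [h21]
    nlinarith [this]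
  -- decay at both ends
  have hcof : Tendsto a cofinite (nhds 0) := hμ'.tendsto_cofinite_zero
  rw [Int.cofinite_eq] at hcof
  have htop : Tendsto a atTop (nhds 0) := hcof.mono_left le_sup_right
  have hbot : Tendsto a atBot (nhds 0) := hcof.mono_left le_sup_left
  by_cases hc : ∃ n₀ : ℤ, 1 ≤ q n₀
  · obtain ⟨n₀, hn₀⟩ := hc
    have hstep : ∀ n : ℤ, n₀ ≤ n → a n ≤ a (n + 1) := by
      intro n hn
      have h1 : 1 ≤ q n := le_trans hn₀ (hqmono hn)
      rw [hqdef] at h1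
      exact (one_le_div (hpos n)).mp h1
    have hclaim : ∀ j : ℕ, a n₀ ≤ a (n₀ + j) := by
      intro j
      induction j with
      | zero => simp
      | succ k ih =>
        have h1 := hstep (n₀ + k) (by omega)
        have hr : (n₀ + (k : ℤ)) + 1 = n₀ + ((k : ℕ) + 1 : ℕ) := by push_cast; ring
        rw [hr] at h1
        exact le_trans ih h1
    have hev : ∀ᶠ n in (atTop : Filter ℤ), a n₀ ≤ a n := by
      rw [eventually_atTop]
      refine ⟨n₀, fun n hn => ?_⟩
      have := hclaim (n - n₀).toNat
      rwa [show n₀ + ((n - n₀).toNat : ℤ) = n by omega] at this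
    have := ge_of_tendsto htop hev
    exact absurd this (not_le.mpr (hpos n₀))
  · push_neg at hc
    have hstep : ∀ n : ℤ, a (n + 1) < a n := by
      intro n
      have h1 := hc n
      rw [hqdef] at h1
      exact (div_lt_one (hpos n)).mp h1
    have hclaim : ∀ j : ℕ, a 0 ≤ a (0 - j) := by
      intro j
      induction j with
      | zero => simp
      | succ k ih =>
        have h1 := hstep (0 - ((k : ℕ) + 1 : ℕ) : ℤ)
        have hr : (0 - ((k : ℕ) + 1 : ℕ) : ℤ) + 1 = 0 - (k : ℤ) := by push_cast; ring
        rw [hr] at h1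
        exact le_trans ih (le_of_lt h1)
    have hev : ∀ᶠ n in (atBot : Filter ℤ), a 0 ≤ a n := by
      rw [eventually_atBot]
      refine ⟨0, fun n hn => ?_⟩
      have := hclaim (0 - n).toNat
      rwa [show (0 : ℤ) - ((0 - n).toNat : ℤ) = n by omega] at this
    have := ge_of_tendsto hbot hev
    exact absurd this (not_le.mpr (hpos 0))
end

section
/- The double integral G(m,n) = (const) ∫₀^{2π}∫₀^{2π} e^{imk₁} e^{ink₂} (1 + e^{ik₁} + e^{ik₂})^{−1} dk₁ dk₂ converges (the integrand's singularity along the curve 1 + e^{ik₁} + e^{ik₂} = 0 is integrable), and G satisfies Q^b G = δ₀ in the sense that G(m,n) + G(m+1,n) + G(m,n+1) = [(m,n) = (0,0)] (up to the normalizing constant (2π)^{−2}). -/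
open MeasureTheory Complex Real

noncomputable def G (m n : ℤ) : ℂ :=
  (1 / (2 * π)^2) *
    ∫ k in Set.Icc (0 : ℝ) (2 * π) ×ˢ Set.Icc (0 : ℝ) (2 * π),
      exp (I * (m * k.1 + n * k.2)) * (1 + exp (I * k.1) + exp (I * k.2))⁻¹

lemma sin_lb' {u : ℝ} (h0 : 0 ≤ u) (h1 : u ≤ 2*π/3) : u ≤ π * Real.sin u := by
  have hπ := Real.pi_pos
  rcases le_or_gt u (π/2) with h | h
  · have h2 := Real.mul_le_sin h0 h
    have h3 : π * (2/π*u) ≤ π * Real.sin u := mul_le_mul_of_nonneg_left h2 hπ.le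
    have h4 : π * (2/π*u) = 2*u := by field_simp
    linarith
  · have h2 : 0 ≤ π - u := by nlinarith
    have h3 : π - u ≤ π/2 := by linarith
    have h4 := Real.mul_le_sin h2 h3
    rw [Real.sin_pi_sub] at h4
    have h5 : π * (2/π*(π-u)) ≤ π * Real.sin u := mul_le_mul_of_nonneg_left h4 hπ.le
    have h6 : π * (2/π*(π-u)) = 2*(π-u) := by field_simp
    nlinarith

lemma sin_abs_lb {u : ℝ} (h : |u| ≤ 2*π/3) : |u| ≤ π * |Real.sin u| := by
  have hπ := Real.pi_pos
  rcases abs_cases u with ⟨he, h0⟩ | ⟨he, h0⟩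
  · rw [he] at h ⊢
    have := sin_lb' h0 h
    have h2 : π * Real.sin u ≤ π * |Real.sin u| :=
      mul_le_mul_of_nonneg_left (le_abs_self _) hπ.le
    linarith
  · rw [he] at h ⊢
    have h2 := sin_lb' (by linarith) h
    rw [Real.sin_neg] at h2
    have h3 : π * (-Real.sin u) ≤ π * |Real.sin u| :=
      mul_le_mul_of_nonneg_left (neg_le_abs _) hπ.le
    linarith

lemma one_sub_cos_lb {t : ℝ} (h : |t| ≤ 4*π/3) : t^2 ≤ π^2 * (2 - 2*Real.cos t) := by
  have hπ := Real.pi_pos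
  have habs : |t/2| = |t|/2 := by rw [abs_div, _root_.abs_two]
  have h2 : |t/2| ≤ 2*π/3 := by rw [habs]; linarith
  have h3 := sin_abs_lb h2
  have h4 : |t/2|^2 ≤ (π * |Real.sin (t/2)|)^2 :=
    pow_le_pow_left₀ (abs_nonneg _) h3 2
  have h5 : |t/2|^2 = t^2/4 := by rw [habs, div_pow, _root_.sq_abs]; ring
  have h6 : (π * |Real.sin (t/2)|)^2 = π^2 * Real.sin (t/2)^2 := by
    rw [mul_pow, _root_.sq_abs]
  have h7 : Real.cos (t/2)^2 = 1/2 + Real.cos t / 2 := by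
    have := Real.cos_sq (t/2); rwa [show 2*(t/2) = t by ring] at this
  have h8 := Real.sin_sq_add_cos_sq (t/2)
  nlinarith [sq_nonneg π]
lemma alg_ineq {c1 s1 c2 s2 : ℝ} (h1 : c1^2+s1^2=1) (h2 : c2^2+s2^2=1) :
    (1/32) * ((4+c1+c2)^2 - 3*(s1-s2)^2) ≤ (1+c1+c2)^2 + (s1+s2)^2 := by
  have key : 3*(c1-c2)^2 ≤ 28*(1+c1+c2)^2 + 29*(s1+s2)^2 := by
    have b1 : (1-c1)*(1-c2) ≥ 0 :=
      mul_nonneg (by nlinarith [sq_nonneg s1]) (by nlinarith [sq_nonneg s2])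
    have b2 : (1+c1)*(1+c2) ≥ 0 :=
      mul_nonneg (by nlinarith [sq_nonneg s1]) (by nlinarith [sq_nonneg s2])
    rcases le_or_gt 0 (s1*s2) with hs | hs
    · nlinarith [sq_nonneg (c1+c2+1), sq_nonneg (c1-c2), sq_nonneg (c1+c2)]
    · have key2 : (s1+s2)^2 * (s1-s2)^2 = (c2^2-c1^2)^2 := by nlinarith [sq_nonneg s1]
      have h4 : (s1-s2)^2 ≤ 4 := by
        nlinarith [sq_nonneg (s1+s2), sq_nonneg s1, sq_nonneg s2, sq_nonneg c1, sq_nonneg c2]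
      have hq : 4*(s1+s2)^2 ≥ (c2^2-c1^2)^2 := by nlinarith [sq_nonneg (s1+s2)]
      nlinarith [sq_nonneg (c1+c2+1), sq_nonneg (c1-c2), sq_nonneg ((c1-c2)*(c1+c2)),
        sq_nonneg ((c1-c2)*(c1+c2+1)), sq_nonneg (c1+c2)]
  nlinarith [key]

lemma exp_I_eq (x : ℝ) : Complex.exp (I * x) =
    (Real.cos x : ℂ) + (Real.sin x : ℂ) * I := by
  rw [mul_comm, Complex.exp_mul_I, Complex.ofReal_cos, Complex.ofReal_sin]

lemma normSq_eq (k1 k2 : ℝ) :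
    Complex.normSq (1 + Complex.exp (I * k1) + Complex.exp (I * k2)) =
      (1 + Real.cos k1 + Real.cos k2)^2 + (Real.sin k1 + Real.sin k2)^2 := by
  rw [exp_I_eq, exp_I_eq, show (1 : ℂ) + ((Real.cos k1 : ℂ) + (Real.sin k1 : ℂ) * I)
      + ((Real.cos k2 : ℂ) + (Real.sin k2 : ℂ) * I)
      = ((1 + Real.cos k1 + Real.cos k2 : ℝ) : ℂ)
        + ((Real.sin k1 + Real.sin k2 : ℝ) : ℂ) * I by push_cast; ring,
    Complex.normSq_add_mul_I]

set_option maxHeartbeats 1600000 in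
lemma normSq_lb {k1 k2 : ℝ} (hk1 : k1 ∈ Set.Icc 0 (2*π)) (hk2 : k2 ∈ Set.Icc 0 (2*π)) :
    |k1 - 2*π/3| * |k1 - 4*π/3| * (|k2 - 2*π/3| * |k2 - 4*π/3|) / (8*π^4)
      ≤ Complex.normSq (1 + Complex.exp (I * k1) + Complex.exp (I * k2)) := by
  have hπ := Real.pi_pos
  obtain ⟨hk1l, hk1r⟩ := hk1
  obtain ⟨hk2l, hk2r⟩ := hk2
  set c1 := Real.cos k1 with hc1
  set s1 := Real.sin k1 with hs1
  set c2 := Real.cos k2 with hc2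
  set s2 := Real.sin k2 with hs2
  have ca : Real.cos (2*π/3) = -(1/2) := by
    rw [show (2*π/3) = π - π/3 by ring, Real.cos_pi_sub, Real.cos_pi_div_three]
  have sa : Real.sin (2*π/3) = Real.sqrt 3 / 2 := by
    rw [show (2*π/3) = π - π/3 by ring, Real.sin_pi_sub, Real.sin_pi_div_three]
  have cb : Real.cos (4*π/3) = -(1/2) := by
    rw [show (4*π/3) = π + π/3 by ring, Real.cos_add, Real.cos_pi, Real.sin_pi,
      Real.cos_pi_div_three]; ring
  have sb : Real.sin (4*π/3) = -(Real.sqrt 3 / 2) := by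
    rw [show (4*π/3) = π + π/3 by ring, Real.sin_add, Real.cos_pi, Real.sin_pi,
      Real.sin_pi_div_three]; ring
  set D1 := (2 - 2*Real.cos (k1 - 2*π/3)) + (2 - 2*Real.cos (k2 - 4*π/3)) with hD1def
  set D2 := (2 - 2*Real.cos (k1 - 4*π/3)) + (2 - 2*Real.cos (k2 - 2*π/3)) with hD2def
  have hD1 : D1 = 4 + c1 + c2 - Real.sqrt 3 * s1 + Real.sqrt 3 * s2 := by
    rw [hD1def, Real.cos_sub, Real.cos_sub, ca, sa, cb, sb]; ring
  have hD2 : D2 = 4 + c1 + c2 + Real.sqrt 3 * s1 - Real.sqrt 3 * s2 := by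
    rw [hD2def, Real.cos_sub, Real.cos_sub, ca, sa, cb, sb]; ring
  have h3 : Real.sqrt 3 ^ 2 = 3 := Real.sq_sqrt (by norm_num)
  have hDD : D1 * D2 = (4+c1+c2)^2 - 3*(s1-s2)^2 := by
    rw [hD1, hD2]; linear_combination (-(s1-s2)^2) * h3
  have halg := alg_ineq (Real.cos_sq_add_sin_sq k1) (Real.cos_sq_add_sin_sq k2)
  rw [← hc1, ← hs1, ← hc2, ← hs2, ← hDD] at halg
  rw [normSq_eq]
  -- lower bounds for D1 and D2
  have e1a : (k1 - 2*π/3)^2 ≤ π^2 * (2 - 2*Real.cos (k1 - 2*π/3)) :=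
    one_sub_cos_lb (by rw [abs_le]; constructor <;> nlinarith)
  have e1b : (k2 - 4*π/3)^2 ≤ π^2 * (2 - 2*Real.cos (k2 - 4*π/3)) :=
    one_sub_cos_lb (by rw [abs_le]; constructor <;> nlinarith)
  have e2a : (k1 - 4*π/3)^2 ≤ π^2 * (2 - 2*Real.cos (k1 - 4*π/3)) :=
    one_sub_cos_lb (by rw [abs_le]; constructor <;> nlinarith)
  have e2b : (k2 - 2*π/3)^2 ≤ π^2 * (2 - 2*Real.cos (k2 - 2*π/3)) :=
    one_sub_cos_lb (by rw [abs_le]; constructor <;> nlinarith)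
  have hb1 : 2 * (|k1 - 2*π/3| * |k2 - 4*π/3|) ≤ π^2 * D1 := by
    rw [hD1def]
    nlinarith [sq_nonneg (|k1 - 2*π/3| - |k2 - 4*π/3|), _root_.sq_abs (k1 - 2*π/3),
      _root_.sq_abs (k2 - 4*π/3)]
  have hb2 : 2 * (|k1 - 4*π/3| * |k2 - 2*π/3|) ≤ π^2 * D2 := by
    rw [hD2def]
    nlinarith [sq_nonneg (|k1 - 4*π/3| - |k2 - 2*π/3|), _root_.sq_abs (k1 - 4*π/3),
      _root_.sq_abs (k2 - 2*π/3)]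
  -- combine
  have hD1nn : 0 ≤ π^2 * D1 := le_trans (by positivity) hb1
  have hD2nn : 0 ≤ π^2 * D2 := le_trans (by positivity) hb2
  have hprod : (2 * (|k1 - 2*π/3| * |k2 - 4*π/3|)) * (2 * (|k1 - 4*π/3| * |k2 - 2*π/3|))
      ≤ (π^2 * D1) * (π^2 * D2) :=
    mul_le_mul hb1 hb2 (by positivity) hD1nn
  have hπ4 : (0:ℝ) < π^4 := by positivity
  rw [div_le_iff₀ (by positivity : (0:ℝ) < 8*π^4)]
  nlinarith [hprod, mul_le_mul_of_nonneg_left halg (by positivity : (0:ℝ) ≤ π^4)]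
lemma neg_rpow_half_zero {t : ℝ} (ht : t < 0) : t ^ (-(1/2) : ℝ) = 0 := by
  rw [Real.rpow_def_of_neg ht, show (-(1/2) : ℝ) * π = -(π/2) by ring,
    Real.cos_neg, Real.cos_pi_div_two, mul_zero]

lemma sqrt_inv_eq_rpow {t : ℝ} (ht : 0 ≤ t) : (Real.sqrt t)⁻¹ = t ^ (-(1/2) : ℝ) := by
  rw [Real.sqrt_eq_rpow, ← Real.rpow_neg ht]

lemma int_sqrt_inv (c : ℝ) :
    IntegrableOn (fun x : ℝ => (Real.sqrt |x - c|)⁻¹) (Set.Icc 0 (2*π)) volume := by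
  have hfun : (fun x : ℝ => (Real.sqrt |x - c|)⁻¹)
      = fun x => (x - c) ^ (-(1/2) : ℝ) + (c - x) ^ (-(1/2) : ℝ) := by
    funext x
    rcases lt_trichotomy x c with h | h | h
    · rw [abs_of_neg (by linarith : x - c < 0), show -(x-c) = c - x by ring,
        sqrt_inv_eq_rpow (by linarith : (0:ℝ) ≤ c - x),
        neg_rpow_half_zero (by linarith : x - c < 0), zero_add]
    · simp [h, Real.zero_rpow (by norm_num : (-(1/2):ℝ) ≠ 0)]
    · rw [abs_of_pos (by linarith : (0:ℝ) < x - c),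
        sqrt_inv_eq_rpow (by linarith : (0:ℝ) ≤ x - c),
        neg_rpow_half_zero (by linarith : c - x < 0), add_zero]
  rw [hfun]
  have hr : (-1 : ℝ) < -(1/2) := by norm_num
  have i1 : IntervalIntegrable (fun x : ℝ => (x - c) ^ (-(1/2) : ℝ)) volume 0 (2*π) := by
    have h := (intervalIntegral.intervalIntegrable_rpow' (a := -c) (b := 2*π - c) hr).comp_sub_right c
    simpa using h
  have i2 : IntervalIntegrable (fun x : ℝ => (c - x) ^ (-(1/2) : ℝ)) volume 0 (2*π) := by
    have h := (intervalIntegral.intervalIntegrable_rpow' (a := c - 2*π) (b := c) hr).comp_sub_left c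
    simpa using h.symm
  have h3 := i1.add i2
  rwa [intervalIntegrable_iff_integrableOn_Icc_of_le (by positivity)] at h3

noncomputable def Hf (x : ℝ) : ℝ := (Real.sqrt |x - 2*π/3|)⁻¹ + (Real.sqrt |x - 4*π/3|)⁻¹

lemma int_Hf : IntegrableOn Hf (Set.Icc 0 (2*π)) volume :=
  (int_sqrt_inv _).add (int_sqrt_inv _)

lemma int_Hf_prod :
    IntegrableOn (fun k : ℝ × ℝ => Hf k.1 * Hf k.2)
      (Set.Icc 0 (2*π) ×ˢ Set.Icc 0 (2*π)) volume := by
  rw [IntegrableOn, Measure.volume_eq_prod, ← Measure.prod_restrict]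
  exact int_Hf.mul_prod int_Hf

lemma Hf_nonneg (x : ℝ) : 0 ≤ Hf x := by unfold Hf; positivity

lemma Hf_lb {x : ℝ} (ha : x ≠ 2*π/3) (hb : x ≠ 4*π/3) :
    π/3 ≤ Hf x ^ 2 * (|x - 2*π/3| * |x - 4*π/3|) := by
  have hπ := Real.pi_pos
  have hA : 0 < |x - 2*π/3| := abs_pos.2 (sub_ne_zero.2 ha)
  have hB : 0 < |x - 4*π/3| := abs_pos.2 (sub_ne_zero.2 hb)
  have htri : 2*π/3 ≤ |x - 2*π/3| + |x - 4*π/3| := by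
    have h := abs_sub (x - 2*π/3) (x - 4*π/3)
    rw [show x - 2*π/3 - (x - 4*π/3) = 2*π/3 by ring, abs_of_pos (by positivity)] at h
    exact h
  rcases le_or_gt (π/3) |x - 2*π/3| with hcase | hcase
  · have hH : (Real.sqrt |x - 4*π/3|)⁻¹ ≤ Hf x := le_add_of_nonneg_left (by positivity)
    have hH2 : ((Real.sqrt |x - 4*π/3|)⁻¹)^2 ≤ Hf x ^ 2 :=
      pow_le_pow_left₀ (by positivity) hH 2
    have hB2 : ((Real.sqrt |x - 4*π/3|)⁻¹)^2 = |x - 4*π/3|⁻¹ := by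
      rw [inv_pow, Real.sq_sqrt hB.le]
    calc π/3 ≤ |x - 2*π/3| := hcase
      _ = |x - 4*π/3|⁻¹ * (|x - 2*π/3| * |x - 4*π/3|) := by
          rw [mul_comm (|x - 2*π/3|), ← mul_assoc, inv_mul_cancel₀ hB.ne', one_mul]
      _ ≤ Hf x ^ 2 * (|x - 2*π/3| * |x - 4*π/3|) := by
          apply mul_le_mul_of_nonneg_right _ (by positivity)
          rw [← hB2]; exact hH2
  · have hcb : π/3 ≤ |x - 4*π/3| := by linarith
    have hH : (Real.sqrt |x - 2*π/3|)⁻¹ ≤ Hf x := le_add_of_nonneg_right (by positivity)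
    have hH2 : ((Real.sqrt |x - 2*π/3|)⁻¹)^2 ≤ Hf x ^ 2 :=
      pow_le_pow_left₀ (by positivity) hH 2
    have hA2 : ((Real.sqrt |x - 2*π/3|)⁻¹)^2 = |x - 2*π/3|⁻¹ := by
      rw [inv_pow, Real.sq_sqrt hA.le]
    calc π/3 ≤ |x - 4*π/3| := hcb
      _ = |x - 2*π/3|⁻¹ * (|x - 2*π/3| * |x - 4*π/3|) := by
          rw [← mul_assoc, inv_mul_cancel₀ hA.ne', one_mul]
      _ ≤ Hf x ^ 2 * (|x - 2*π/3| * |x - 4*π/3|) := by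
          apply mul_le_mul_of_nonneg_right _ (by positivity)
          rw [← hA2]; exact hH2
set_option maxHeartbeats 1600000 in
lemma ptwise_bound {k : ℝ × ℝ}
    (hk : k ∈ Set.Icc (0:ℝ) (2*π) ×ˢ Set.Icc (0:ℝ) (2*π))
    (h1a : k.1 ≠ 2*π/3) (h1b : k.1 ≠ 4*π/3) (h2a : k.2 ≠ 2*π/3) (h2b : k.2 ≠ 4*π/3) :
    ‖(1 + Complex.exp (I * k.1) + Complex.exp (I * k.2))⁻¹‖
      ≤ 9*π * (Hf k.1 * Hf k.2) := by
  have hπ := Real.pi_pos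
  set z := 1 + Complex.exp (I * k.1) + Complex.exp (I * k.2) with hz
  set A1 := |k.1 - 2*π/3| * |k.1 - 4*π/3| with hA1
  set A2 := |k.2 - 2*π/3| * |k.2 - 4*π/3| with hA2
  have hA1pos : 0 < A1 :=
    mul_pos (abs_pos.2 (sub_ne_zero.2 h1a)) (abs_pos.2 (sub_ne_zero.2 h1b))
  have hA2pos : 0 < A2 :=
    mul_pos (abs_pos.2 (sub_ne_zero.2 h2a)) (abs_pos.2 (sub_ne_zero.2 h2b))
  have hns : A1 * A2 / (8*π^4) ≤ Complex.normSq z := by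
    exact normSq_lb hk.1 hk.2
  have hzpos : 0 < ‖z‖ := by
    rw [Complex.norm_def]
    apply Real.sqrt_pos.2
    calc (0:ℝ) < A1 * A2 / (8*π^4) := by positivity
      _ ≤ Complex.normSq z := hns
  have hHf1 := Hf_lb h1a h1b
  have hHf2 := Hf_lb h2a h2b
  have hM : 0 < 9*π * (Hf k.1 * Hf k.2) := by
    have h1 : 0 < Hf k.1 ^ 2 * A1 := lt_of_lt_of_le (by positivity) hHf1
    have h2 : 0 < Hf k.2 ^ 2 * A2 := lt_of_lt_of_le (by positivity) hHf2
    have hp1 : 0 < Hf k.1 := by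
      rcases (Hf_nonneg k.1).lt_or_eq with h | h
      · exact h
      · exfalso; rw [← h] at h1; simp at h1
    have hp2 : 0 < Hf k.2 := by
      rcases (Hf_nonneg k.2).lt_or_eq with h | h
      · exact h
      · exfalso; rw [← h] at h2; simp at h2
    positivity
  rw [norm_inv, inv_eq_one_div, div_le_iff₀ hzpos]
  -- reduce to the squared inequality
  have hsq : 1 ≤ (9*π * (Hf k.1 * Hf k.2) * ‖z‖)^2 := by
    have hexpand : (9*π * (Hf k.1 * Hf k.2) * ‖z‖)^2
        = (81*π^2) * (Hf k.1^2 * Hf k.2^2) * Complex.normSq z := by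
      rw [mul_pow, mul_pow, mul_pow, Complex.sq_norm]; ring
    rw [hexpand]
    have step1 : (81*π^2) * (Hf k.1^2 * Hf k.2^2) * (A1 * A2 / (8*π^4))
        ≤ (81*π^2) * (Hf k.1^2 * Hf k.2^2) * Complex.normSq z :=
      mul_le_mul_of_nonneg_left hns (by positivity)
    have step2 : (81/(8*π^2)) * ((Hf k.1^2 * A1) * (Hf k.2^2 * A2))
        = (81*π^2) * (Hf k.1^2 * Hf k.2^2) * (A1 * A2 / (8*π^4)) := by
      field_simp
    have step3 : (81/(8*π^2)) * ((π/3) * (π/3))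
        ≤ (81/(8*π^2)) * ((Hf k.1^2 * A1) * (Hf k.2^2 * A2)) := by
      apply mul_le_mul_of_nonneg_left _ (by positivity)
      apply mul_le_mul hHf1 hHf2 (by positivity) (le_trans (by positivity) hHf1)
    have step4 : (1:ℝ) ≤ (81/(8*π^2)) * ((π/3) * (π/3)) := by
      have : (81/(8*π^2)) * ((π/3) * (π/3)) = 9/8 := by field_simp; ring
      rw [this]; norm_num
    linarith
  nlinarith [mul_pos hM hzpos]
lemma bad_set_null :
    volume {k : ℝ × ℝ | k.1 = 2*π/3 ∨ k.1 = 4*π/3 ∨ k.2 = 2*π/3 ∨ k.2 = 4*π/3} = 0 := by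
  apply measure_mono_null
    (t := ({2*π/3, 4*π/3} : Set ℝ) ×ˢ (Set.univ : Set ℝ)
      ∪ (Set.univ : Set ℝ) ×ˢ ({2*π/3, 4*π/3} : Set ℝ))
  · rintro ⟨x, y⟩ h
    rcases h with h | h | h | h
    · exact Or.inl ⟨Or.inl h, trivial⟩
    · exact Or.inl ⟨Or.inr h, trivial⟩
    · exact Or.inr ⟨trivial, Or.inl h⟩
    · exact Or.inr ⟨trivial, Or.inr h⟩
  · apply measure_union_null
    · rw [Measure.volume_eq_prod, Measure.prod_prod,
        Set.Finite.measure_zero (Set.toFinite ({2*π/3, 4*π/3} : Set ℝ)) volume, zero_mul]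
    · rw [Measure.volume_eq_prod, Measure.prod_prod,
        Set.Finite.measure_zero (Set.toFinite ({2*π/3, 4*π/3} : Set ℝ)) volume, mul_zero]

lemma ae_good : ∀ᵐ k : ℝ × ℝ ∂volume,
    k.1 ≠ 2*π/3 ∧ k.1 ≠ 4*π/3 ∧ k.2 ≠ 2*π/3 ∧ k.2 ≠ 4*π/3 := by
  have h := bad_set_null
  rw [← MeasureTheory.compl_mem_ae_iff] at h
  filter_upwards [h] with k hk
  simp only [Set.mem_compl_iff, Set.mem_setOf_eq] at hk
  push_neg at hk
  exact hk

lemma part1 :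
    IntegrableOn
      (fun k : ℝ × ℝ => ‖(1 + Complex.exp (I * k.1) + Complex.exp (I * k.2))⁻¹‖)
      (Set.Icc (0 : ℝ) (2 * π) ×ˢ Set.Icc (0 : ℝ) (2 * π)) volume := by
  have hcont : Continuous (fun k : ℝ × ℝ => 1 + Complex.exp (I * k.1) + Complex.exp (I * k.2)) := by
    fun_prop
  have hmeas : Measurable
      (fun k : ℝ × ℝ => ‖(1 + Complex.exp (I * k.1) + Complex.exp (I * k.2))⁻¹‖) :=
    hcont.measurable.inv.norm
  apply Integrable.mono' (int_Hf_prod.const_mul (9*π)) hmeas.aestronglyMeasurable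
  rw [ae_restrict_iff' (measurableSet_Icc.prod measurableSet_Icc)]
  filter_upwards [ae_good] with k hgood hk
  rw [norm_norm]
  exact ptwise_bound hk hgood.1 hgood.2.1 hgood.2.2.1 hgood.2.2.2
lemma J_eval (m : ℤ) :
    (∫ x in Set.Icc (0:ℝ) (2*π), Complex.exp (I * (m * x))) =
      if m = 0 then ((2*π : ℝ) : ℂ) else 0 := by
  have hπ := Real.pi_pos
  rw [MeasureTheory.integral_Icc_eq_integral_Ioc,
    ← intervalIntegral.integral_of_le (by positivity : (0:ℝ) ≤ 2*π)]
  rcases eq_or_ne m 0 with hm | hm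
  · subst hm
    simp
  · rw [if_neg hm]
    have hrw : ∀ x : ℝ, I * ((m:ℂ) * (x:ℂ)) = (I * (m:ℂ)) * (x:ℂ) := by intro x; ring
    simp_rw [hrw]
    rw [integral_exp_mul_complex
      (mul_ne_zero Complex.I_ne_zero (Int.cast_ne_zero.mpr hm))]
    have h1 : I * (m:ℂ) * ((2*π : ℝ) : ℂ) = (m:ℂ) * (2 * (π:ℂ) * I) := by push_cast; ring
    rw [h1, Complex.exp_int_mul_two_pi_mul_I]
    simp

lemma z_ne_zero {k : ℝ × ℝ}
    (hk : k ∈ Set.Icc (0:ℝ) (2*π) ×ˢ Set.Icc (0:ℝ) (2*π))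
    (h1a : k.1 ≠ 2*π/3) (h1b : k.1 ≠ 4*π/3) (h2a : k.2 ≠ 2*π/3) (h2b : k.2 ≠ 4*π/3) :
    1 + Complex.exp (I * k.1) + Complex.exp (I * k.2) ≠ 0 := by
  intro h0
  have h := normSq_lb hk.1 hk.2
  rw [h0, map_zero] at h
  have hA1 : 0 < |k.1 - 2*π/3| := abs_pos.2 (sub_ne_zero.2 h1a)
  have hA2 : 0 < |k.1 - 4*π/3| := abs_pos.2 (sub_ne_zero.2 h1b)
  have hA3 : 0 < |k.2 - 2*π/3| := abs_pos.2 (sub_ne_zero.2 h2a)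
  have hA4 : 0 < |k.2 - 4*π/3| := abs_pos.2 (sub_ne_zero.2 h2b)
  have hπ := Real.pi_pos
  have hpos := div_pos (mul_pos (mul_pos hA1 hA2) (mul_pos hA3 hA4))
    (by positivity : (0:ℝ) < 8*π^4)
  linarith

lemma int_f (m n : ℤ) :
    IntegrableOn
      (fun k : ℝ × ℝ => Complex.exp (I * (m * k.1 + n * k.2))
        * (1 + Complex.exp (I * k.1) + Complex.exp (I * k.2))⁻¹)
      (Set.Icc (0 : ℝ) (2 * π) ×ˢ Set.Icc (0 : ℝ) (2 * π)) volume := by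
  have hcont1 : Continuous (fun k : ℝ × ℝ =>
      Complex.exp (I * ((m:ℂ) * k.1 + (n:ℂ) * k.2))) := by fun_prop
  have hcont2 : Continuous (fun k : ℝ × ℝ =>
      1 + Complex.exp (I * k.1) + Complex.exp (I * k.2)) := by fun_prop
  apply Integrable.mono' part1
    (hcont1.measurable.mul hcont2.measurable.inv).aestronglyMeasurable
  apply Filter.Eventually.of_forall
  intro k
  simp only [Pi.mul_apply, Pi.inv_apply]
  rw [norm_mul]
  have h1 : (I * ((m:ℂ) * k.1 + (n:ℂ) * k.2)) = ((m*k.1 + n*k.2 : ℝ) : ℂ) * I := by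
    push_cast; ring
  rw [h1, Complex.norm_exp_ofReal_mul_I, one_mul]

/-- The Fourier-integral Green function of the black triangle operator: the integrand
is integrable and `QᵇG = δ₀`. -/
theorem green_function_fourier :
    IntegrableOn
      (fun k : ℝ × ℝ => ‖(1 + exp (I * k.1) + exp (I * k.2))⁻¹‖)
      (Set.Icc (0 : ℝ) (2 * π) ×ˢ Set.Icc (0 : ℝ) (2 * π)) volume ∧
    ∀ m n : ℤ, G m n + G (m + 1) n + G m (n + 1) =
      if m = 0 ∧ n = 0 then 1 else 0 := by
  constructor
  · exact part1
  · intro m n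
    have hπ := Real.pi_pos
    have hSmeas : MeasurableSet (Set.Icc (0:ℝ) (2*π) ×ˢ Set.Icc (0:ℝ) (2*π)) :=
      measurableSet_Icc.prod measurableSet_Icc
    have i1 := int_f m n
    have i2 := int_f (m+1) n
    have i3 := int_f m (n+1)
    have hexpand : G m n + G (m + 1) n + G m (n + 1)
        = (1 / (2*(π:ℂ))^2) *
          ((∫ k in Set.Icc (0:ℝ) (2*π) ×ˢ Set.Icc (0:ℝ) (2*π),
            Complex.exp (I * (m * k.1 + n * k.2))
              * (1 + Complex.exp (I * k.1) + Complex.exp (I * k.2))⁻¹)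
          + (∫ k in Set.Icc (0:ℝ) (2*π) ×ˢ Set.Icc (0:ℝ) (2*π),
            Complex.exp (I * (((m+1 : ℤ) : ℂ) * k.1 + n * k.2))
              * (1 + Complex.exp (I * k.1) + Complex.exp (I * k.2))⁻¹)
          + (∫ k in Set.Icc (0:ℝ) (2*π) ×ˢ Set.Icc (0:ℝ) (2*π),
            Complex.exp (I * (m * k.1 + ((n+1 : ℤ) : ℂ) * k.2))
              * (1 + Complex.exp (I * k.1) + Complex.exp (I * k.2))⁻¹)) := by
      simp only [G]
      ring
    have hadd : (∫ k in Set.Icc (0:ℝ) (2*π) ×ˢ Set.Icc (0:ℝ) (2*π),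
          (Complex.exp (I * (m * k.1 + n * k.2))
              * (1 + Complex.exp (I * k.1) + Complex.exp (I * k.2))⁻¹
            + Complex.exp (I * (((m+1 : ℤ) : ℂ) * k.1 + n * k.2))
              * (1 + Complex.exp (I * k.1) + Complex.exp (I * k.2))⁻¹
            + Complex.exp (I * (m * k.1 + ((n+1 : ℤ) : ℂ) * k.2))
              * (1 + Complex.exp (I * k.1) + Complex.exp (I * k.2))⁻¹))
        = (∫ k in Set.Icc (0:ℝ) (2*π) ×ˢ Set.Icc (0:ℝ) (2*π),
            Complex.exp (I * (m * k.1 + n * k.2))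
              * (1 + Complex.exp (I * k.1) + Complex.exp (I * k.2))⁻¹)
          + (∫ k in Set.Icc (0:ℝ) (2*π) ×ˢ Set.Icc (0:ℝ) (2*π),
            Complex.exp (I * (((m+1 : ℤ) : ℂ) * k.1 + n * k.2))
              * (1 + Complex.exp (I * k.1) + Complex.exp (I * k.2))⁻¹)
          + (∫ k in Set.Icc (0:ℝ) (2*π) ×ˢ Set.Icc (0:ℝ) (2*π),
            Complex.exp (I * (m * k.1 + ((n+1 : ℤ) : ℂ) * k.2))
              * (1 + Complex.exp (I * k.1) + Complex.exp (I * k.2))⁻¹) := by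
      exact (integral_add (i1.add i2) i3).trans
        (by simp only [Pi.add_apply]; rw [integral_add i1 i2])
    have hcongr : (∫ k in Set.Icc (0:ℝ) (2*π) ×ˢ Set.Icc (0:ℝ) (2*π),
          (Complex.exp (I * (m * k.1 + n * k.2))
              * (1 + Complex.exp (I * k.1) + Complex.exp (I * k.2))⁻¹
            + Complex.exp (I * (((m+1 : ℤ) : ℂ) * k.1 + n * k.2))
              * (1 + Complex.exp (I * k.1) + Complex.exp (I * k.2))⁻¹
            + Complex.exp (I * (m * k.1 + ((n+1 : ℤ) : ℂ) * k.2))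
              * (1 + Complex.exp (I * k.1) + Complex.exp (I * k.2))⁻¹))
        = ∫ k in Set.Icc (0:ℝ) (2*π) ×ˢ Set.Icc (0:ℝ) (2*π),
            Complex.exp (I * ((m:ℂ) * k.1)) * Complex.exp (I * ((n:ℂ) * k.2)) := by
      apply integral_congr_ae
      filter_upwards [ae_restrict_mem hSmeas, ae_restrict_of_ae ae_good] with k hkS hgood
      have hz := z_ne_zero hkS hgood.1 hgood.2.1 hgood.2.2.1 hgood.2.2.2
      have e2 : Complex.exp (I * (((m+1:ℤ):ℂ) * k.1 + (n:ℂ) * k.2))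
          = Complex.exp (I * ((m:ℂ) * k.1 + (n:ℂ) * k.2)) * Complex.exp (I * k.1) := by
        rw [← Complex.exp_add]; congr 1; push_cast; ring
      have e3 : Complex.exp (I * ((m:ℂ) * k.1 + ((n+1:ℤ):ℂ) * k.2))
          = Complex.exp (I * ((m:ℂ) * k.1 + (n:ℂ) * k.2)) * Complex.exp (I * k.2) := by
        rw [← Complex.exp_add]; congr 1; push_cast; ring
      have e0 : Complex.exp (I * ((m:ℂ) * k.1 + (n:ℂ) * k.2))
          = Complex.exp (I * ((m:ℂ) * k.1)) * Complex.exp (I * ((n:ℂ) * k.2)) := by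
        rw [← Complex.exp_add]; congr 1; ring
      rw [e2, e3, ← e0]
      calc Complex.exp (I * ((m:ℂ) * k.1 + (n:ℂ) * k.2))
            * (1 + Complex.exp (I * k.1) + Complex.exp (I * k.2))⁻¹
          + Complex.exp (I * ((m:ℂ) * k.1 + (n:ℂ) * k.2)) * Complex.exp (I * k.1)
            * (1 + Complex.exp (I * k.1) + Complex.exp (I * k.2))⁻¹
          + Complex.exp (I * ((m:ℂ) * k.1 + (n:ℂ) * k.2)) * Complex.exp (I * k.2)
            * (1 + Complex.exp (I * k.1) + Complex.exp (I * k.2))⁻¹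
          = Complex.exp (I * ((m:ℂ) * k.1 + (n:ℂ) * k.2))
            * ((1 + Complex.exp (I * k.1) + Complex.exp (I * k.2))
              * (1 + Complex.exp (I * k.1) + Complex.exp (I * k.2))⁻¹) := by ring
        _ = Complex.exp (I * ((m:ℂ) * k.1 + (n:ℂ) * k.2)) := by
            rw [mul_inv_cancel₀ hz, mul_one]
    have hprod : (∫ k in Set.Icc (0:ℝ) (2*π) ×ˢ Set.Icc (0:ℝ) (2*π),
          Complex.exp (I * ((m:ℂ) * k.1)) * Complex.exp (I * ((n:ℂ) * k.2)))
        = (∫ x in Set.Icc (0:ℝ) (2*π), Complex.exp (I * ((m:ℂ) * x)))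
          * (∫ x in Set.Icc (0:ℝ) (2*π), Complex.exp (I * ((n:ℂ) * x))) := by
      rw [Measure.volume_eq_prod]
      exact MeasureTheory.setIntegral_prod_mul (fun x : ℝ => Complex.exp (I * ((m:ℂ) * x)))
        (fun y : ℝ => Complex.exp (I * ((n:ℂ) * y))) _ _
    rw [hexpand, ← hadd, hcongr, hprod, J_eval, J_eval]
    have hπC : ((π:ℝ):ℂ) ≠ 0 := Complex.ofReal_ne_zero.mpr Real.pi_ne_zero
    by_cases hm : m = 0 <;> by_cases hn : n = 0 <;>
      simp [hm, hn] <;> push_cast <;> field_simp <;> ring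
end
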